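/- arXiv:2109.12837 — 6 statements merged into one kernel-verified Lean document; each statement's English description precedes it below -/
import Mathlib

section
/- Let f : X × Y → Z be a continuous map, where Z × Y is a k-space. Then the map F : X × Y → Z × Y defined by F(x,y) = (f(x,y), y) is proper (i.e. closed with compact fibers) if and only if for all compact subsets C ⊆ Z and B ⊆ Y, the set A = {a ∈ X : ∃ b ∈ B, f(a,b) ∈ C} is compact. -/
/-- Let `f : X × Y → Z` be a continuous map, where `Z × Y` is a k-space (compactly
generated). Then the map `F : X × Y → Z × Y`, `F(x,y) = (f(x,y), y)` is proper if and
only if for all compact `C ⊆ Z` and `B ⊆ Y`, the set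
`{a ∈ X | ∃ b ∈ B, f(a,b) ∈ C}` is compact. -/
theorem stmt_0 {X Y Z : Type*} [TopologicalSpace X] [TopologicalSpace Y] [TopologicalSpace Z]
    [T2Space X] [T2Space Y] [T2Space Z] [CompactlyGeneratedSpace (Z × Y)]
    (f : X × Y → Z) (hf : Continuous f) :
    IsProperMap (fun p : X × Y => (f p, p.2)) ↔
      ∀ C : Set Z, ∀ B : Set Y, IsCompact C → IsCompact B →
        IsCompact {a : X | ∃ b ∈ B, f (a, b) ∈ C} := by
  have hF : Continuous (fun p : X × Y => (f p, p.2)) := hf.prodMk continuous_snd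
  rw [isProperMap_iff_isCompact_preimage]
  constructor
  · intro h C B hC hB
    have hpre := h.2 (hC.prod hB)
    have : {a : X | ∃ b ∈ B, f (a, b) ∈ C} =
        Prod.fst '' ((fun p : X × Y => (f p, p.2)) ⁻¹' (C ×ˢ B)) := by
      ext a
      simp only [Set.mem_image, Set.mem_preimage, Set.mem_prod, Set.mem_setOf_eq, Prod.exists]
      constructor
      · rintro ⟨b, hb, hfb⟩; exact ⟨a, b, ⟨hfb, hb⟩, rfl⟩
      · rintro ⟨a', b, ⟨hfb, hb⟩, rfl⟩; exact ⟨b, hb, hfb⟩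
    rw [this]
    exact hpre.image continuous_fst
  · intro h
    refine ⟨hF, fun K hK => ?_⟩
    set C := Prod.fst '' K with hCdef
    set B := Prod.snd '' K with hBdef
    have hC : IsCompact C := hK.image continuous_fst
    have hB : IsCompact B := hK.image continuous_snd
    have hA : IsCompact {a : X | ∃ b ∈ B, f (a, b) ∈ C} := h C B hC hB
    have hsub : (fun p : X × Y => (f p, p.2)) ⁻¹' K ⊆
        {a : X | ∃ b ∈ B, f (a, b) ∈ C} ×ˢ B := by
      rintro ⟨a, b⟩ hp
      exact ⟨⟨b, ⟨(f (a, b), b), hp, rfl⟩, ⟨(f (a, b), b), hp, rfl⟩⟩, ⟨(f (a, b), b), hp, rfl⟩⟩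
    have hclosed : IsClosed ((fun p : X × Y => (f p, p.2)) ⁻¹' K) :=
      hK.isClosed.preimage hF
    exact (hA.prod hB).of_isClosed_subset hclosed hsub
end

section
/- Let f : X × Y → Y be continuous with F(x,y) = (f(x,y), y) proper, suppose f is an open map, and suppose the relation y ∼ f(x,y) (for all x) is an equivalence relation on Y. Then the quotient map q : Y → Y/∼ is open and the quotient space Y/∼ is Hausdorff. -/
/-- Let `f : X × Y → Y` be continuous with `F(x,y) = (f(x,y), y)` proper, suppose `f`
is an open map, and suppose `y ∼ f(x,y)` is an equivalence relation on `Y`. Then the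
quotient map `q : Y → Y/∼` is open and `Y/∼` is Hausdorff. -/
theorem stmt_3 {X Y : Type*} [TopologicalSpace X] [TopologicalSpace Y]
    [T2Space X] [T2Space Y]
    (f : X × Y → Y) (hF : IsProperMap (fun p : X × Y => (f p, p.2)))
    (hopen : IsOpenMap f)
    (s : Setoid Y) (hs : ∀ y y' : Y, s.r y y' ↔ ∃ x : X, f (x, y) = y') :
    IsOpenMap (Quotient.mk s) ∧ T2Space (Quotient s) := by
  -- `q a = q b ↔ a ∼ b`
  have hq : ∀ a b : Y, Quotient.mk s a = Quotient.mk s b ↔ s.r a b := fun a b =>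
    ⟨Quotient.exact, Quotient.sound⟩
  -- openness of the quotient map
  have hopenq : IsOpenMap (Quotient.mk s) := by
    intro U hU
    rw [isOpen_coinduced]
    have : Quotient.mk s ⁻¹' (Quotient.mk s '' U) = f '' (Set.univ ×ˢ U) := by
      ext z
      simp only [Set.mem_preimage, Set.mem_image, Set.mem_prod, Set.mem_univ, true_and]
      constructor
      · rintro ⟨u, hu, huz⟩
        obtain ⟨x, hx⟩ := (hs u z).mp (s.symm ((hq z u).mp huz.symm))
        exact ⟨(x, u), hu, hx⟩
      · rintro ⟨⟨x, u⟩, hu, hx⟩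
        exact ⟨u, hu, ((hq u z).mpr ((hs u z).mpr ⟨x, hx⟩))⟩
    show IsOpen (Quotient.mk s ⁻¹' (Quotient.mk s '' U))
    rw [this]
    exact hopen _ (isOpen_univ.prod hU)
  refine ⟨hopenq, ?_⟩
  -- the relation, as a subset of `Y × Y`, is closed
  have hRclosed : IsClosed {p : Y × Y | s.r p.1 p.2} := by
    have : {p : Y × Y | s.r p.1 p.2} =
        Prod.swap '' Set.range (fun p : X × Y => (f p, p.2)) := by
      ext ⟨a, b⟩
      simp only [Set.mem_setOf_eq, Set.image_swap_eq_preimage_swap, Set.mem_preimage,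
        Set.mem_range, Prod.swap_prod_mk, Prod.mk.injEq, hs]
      constructor
      · rintro ⟨x, hx⟩; exact ⟨(x, a), hx, rfl⟩
      · rintro ⟨⟨x, y⟩, h1, rfl⟩; exact ⟨x, h1⟩
    rw [this, Set.image_swap_eq_preimage_swap]
    exact hF.isClosed_range.preimage continuous_swap
  -- the diagonal of the quotient is closed
  rw [t2_iff_isClosed_diagonal]
  rw [← isOpen_compl_iff]
  have hsurj : Function.Surjective (Quotient.mk s) := Quotient.mk''_surjective
  have himg : (Set.diagonal (Quotient s))ᶜ =
      (Prod.map (Quotient.mk s) (Quotient.mk s)) '' {p : Y × Y | s.r p.1 p.2}ᶜ := by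
    ext ⟨u, v⟩
    simp only [Set.mem_compl_iff, Set.mem_diagonal_iff, Set.mem_image, Prod.exists,
      Prod.map_apply, Prod.mk.injEq, Set.mem_setOf_eq]
    constructor
    · intro h
      obtain ⟨a, rfl⟩ := hsurj u
      obtain ⟨b, rfl⟩ := hsurj v
      exact ⟨a, b, fun hr => h ((hq a b).mpr hr), rfl, rfl⟩
    · rintro ⟨a, b, hab, rfl, rfl⟩ h
      exact hab ((hq a b).mp h)
  rw [himg]
  exact (hopenq.prodMap hopenq) _ hRclosed.isOpen_compl
end

section
/- Let G be a topological group acting continuously on a topological space X that is first countable or locally compact. Then the action is proper (i.e. the map G × X → X × X, (g,x) ↦ (gx, x), is proper) if and only if for all compact subsets B, C ⊆ X, the set {g ∈ G : g(B) ∩ C ≠ ∅} is compact. -/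
/-- Let `G` be a topological group acting continuously on a space `X` that is first
countable or locally compact. Then the action is proper iff for all compact
`B, C ⊆ X` the set `{g | gB ∩ C ≠ ∅}` is compact. -/
theorem stmt_4 {G X : Type*} [Group G] [TopologicalSpace G] [IsTopologicalGroup G]
    [T2Space G] [TopologicalSpace X] [T2Space X] [MulAction G X] [ContinuousSMul G X]
    (hX : FirstCountableTopology X ∨ LocallyCompactSpace X) :
    IsProperMap (fun p : G × X => (p.1 • p.2, p.2)) ↔
      ∀ B C : Set X, IsCompact B → IsCompact C →
        IsCompact {g : G | ((g • ·) '' B) ∩ C ≠ ∅} := by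
  have hCG : CompactlyGeneratedSpace (X × X) := by
    rcases hX with h | h
    · exact inferInstance
    · exact inferInstance
  have hcont : Continuous (fun p : G × X => (p.1 • p.2, p.2)) := by fun_prop
  rw [isProperMap_iff_isCompact_preimage]
  constructor
  · rintro ⟨-, hc⟩ B C hB hC
    have hK : IsCompact ((fun p : G × X => (p.1 • p.2, p.2)) ⁻¹' (C ×ˢ B)) :=
      hc (hC.prod hB)
    have : {g : G | ((g • ·) '' B) ∩ C ≠ ∅} =
        Prod.fst '' ((fun p : G × X => (p.1 • p.2, p.2)) ⁻¹' (C ×ˢ B)) := by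
      ext g
      simp only [Set.mem_setOf_eq, Set.mem_image, Set.mem_preimage, Set.mem_prod,
        ← Set.nonempty_iff_ne_empty, Set.inter_nonempty_iff_exists_left, Prod.exists]
      constructor
      · rintro ⟨c, ⟨b, hb, rfl⟩, hc⟩
        exact ⟨g, b, ⟨hc, hb⟩, rfl⟩
      · rintro ⟨g', x, ⟨hc, hb⟩, rfl⟩
        exact ⟨g' • x, ⟨x, hb, rfl⟩, hc⟩
    rw [this]
    exact hK.image continuous_fst
  · intro h
    refine ⟨hcont, fun {K} hK => ?_⟩
    set B := Prod.snd '' K with hBdef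
    set C := Prod.fst '' K with hCdef
    have hB : IsCompact B := hK.image continuous_snd
    have hC : IsCompact C := hK.image continuous_fst
    have hsub : (fun p : G × X => (p.1 • p.2, p.2)) ⁻¹' K ⊆
        {g : G | ((g • ·) '' B) ∩ C ≠ ∅} ×ˢ B := by
      rintro ⟨g, x⟩ hgx
      refine ⟨?_, ⟨_, hgx, rfl⟩⟩
      rw [Set.mem_setOf_eq, ← Set.nonempty_iff_ne_empty]
      exact ⟨g • x, ⟨x, ⟨_, hgx, rfl⟩, rfl⟩, ⟨_, hgx, rfl⟩⟩
    exact ((h B C hB hC).prod hB).of_isClosed_subset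
      (hK.isClosed.preimage hcont) hsub
end

section
/- Let G act continuously on X and K act continuously on Y, with α : G → K a continuous homomorphism and f : X → Y a proper equivariant map. If α is a closed map with compact kernel and the K-action on Y is proper, then the G-action on X is proper. -/
/-- With `α : G → K` a continuous homomorphism and `f : X → Y` a proper equivariant
map: if `α` is closed with compact kernel and the `K`-action on `Y` is proper, then
the `G`-action on `X` is proper. -/
theorem stmt_8 {G K X Y : Type*} [Group G] [TopologicalSpace G] [IsTopologicalGroup G]
    [Group K] [TopologicalSpace K] [IsTopologicalGroup K] [T2Space G] [T2Space K]
    [TopologicalSpace X] [T2Space X] [TopologicalSpace Y] [T2Space Y]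
    [MulAction G X] [ContinuousSMul G X] [MulAction K Y] [ContinuousSMul K Y]
    (α : G →* K) (hα : Continuous α) (hclosed : IsClosedMap (α : G → K))
    (hker : IsCompact (α.ker : Set G))
    (f : X → Y) (hf : IsProperMap f) (hequiv : ∀ (g : G) (x : X), f (g • x) = α g • f x)
    (hK : IsProperMap (fun p : K × Y => (p.1 • p.2, p.2))) :
    IsProperMap (fun p : G × X => (p.1 • p.2, p.2)) := by
  -- α is a proper map: closed with compact fibers
  have hαproper : IsProperMap (α : G → K) := by
    rw [isProperMap_iff_isClosedMap_and_compact_fibers]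
    refine ⟨hα, hclosed, fun k => ?_⟩
    rcases Set.eq_empty_or_nonempty (α ⁻¹' {k}) with h | ⟨g₀, hg₀⟩
    · simp only [h]; exact isCompact_empty
    · have hg₀' : α g₀ = k := hg₀
      have : α ⁻¹' {k} = (fun g => g₀ * g) '' (α.ker : Set G) := by
        ext g
        simp only [Set.mem_preimage, Set.mem_singleton_iff, Set.mem_image,
          SetLike.mem_coe, MonoidHom.mem_ker]
        constructor
        · intro hg
          exact ⟨g₀⁻¹ * g, by simp [map_mul, hg, hg₀'], by group⟩
        · rintro ⟨h, hh, rfl⟩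
          simp [map_mul, hh, hg₀']
      rw [this]
      exact hker.image (continuous_mul_left g₀)
  have hΘ : IsProperMap (Prod.map (α : G → K) f) := hαproper.prodMap hf
  have hcomp : IsProperMap ((fun p : K × Y => (p.1 • p.2, p.2)) ∘ Prod.map (α : G → K) f) :=
    hK.comp hΘ
  have heq : (Prod.map f f) ∘ (fun p : G × X => (p.1 • p.2, p.2)) =
      (fun p : K × Y => (p.1 • p.2, p.2)) ∘ Prod.map (α : G → K) f := by
    funext p
    simp [Prod.map, hequiv]
  have h1 : Continuous (fun p : G × X => (p.1 • p.2, p.2)) :=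
    (continuous_fst.smul continuous_snd).prodMk continuous_snd
  have h2 : Continuous (Prod.map f f) := hf.continuous.prodMap hf.continuous
  exact isProperMap_of_comp_of_t2 h1 h2 (heq ▸ hcomp)
end

section
/- Let X be a proper metric space (closed bounded sets are compact). Then the map IE(X) × X → X × X, (g,x) ↦ (gx, x), is a proper map, where IE(X) is the monoid of isometric embeddings with the topology of pointwise convergence. In particular, IE(X) is locally compact. -/
open Metric Set

section aux

variable {X : Type*} [MetricSpace X] [ProperSpace X]

lemma isom_closed_aux : IsClosed {f : X → X | Isometry f} := by
  have : {f : X → X | Isometry f} =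
      ⋂ (a : X), ⋂ (b : X), {f : X → X | dist (f a) (f b) = dist a b} := by
    ext f
    simp only [mem_setOf_eq, mem_iInter]
    exact ⟨fun h a b => h.dist_eq a b, fun h => Isometry.of_dist_eq h⟩
  rw [this]
  exact isClosed_iInter fun a => isClosed_iInter fun b =>
    isClosed_eq ((continuous_apply a).dist (continuous_apply b)) continuous_const

lemma key_compact_aux (x₀ : X) (c : ℝ) :
    IsCompact {f : X → X | Isometry f ∧ dist (f x₀) x₀ ≤ c} := by
  have hsub : {f : X → X | Isometry f ∧ dist (f x₀) x₀ ≤ c} ⊆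
      Set.pi Set.univ (fun y => closedBall x₀ (dist y x₀ + c)) := by
    rintro f ⟨hf, hd⟩ y _
    have h1 := hf.dist_eq y x₀
    have := dist_triangle (f y) (f x₀) x₀
    simp only [mem_closedBall]
    linarith
  have hcomp : IsCompact (Set.pi Set.univ (fun y : X => closedBall x₀ (dist y x₀ + c))) :=
    isCompact_univ_pi fun y => isCompact_closedBall _ _
  have hclosed : IsClosed {f : X → X | Isometry f ∧ dist (f x₀) x₀ ≤ c} :=
    isom_closed_aux.inter
      (isClosed_le ((continuous_apply x₀).dist continuous_const) continuous_const)
  exact hcomp.of_isClosed_subset hclosed hsub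

lemma eval_cont_aux :
    Continuous (fun p : {f : X → X // Isometry f} × X => p.1.1 p.2) := by
  rw [continuous_iff_continuousAt]
  rintro ⟨g₀, x₀⟩
  rw [ContinuousAt, Metric.tendsto_nhds]
  intro ε hε
  have hc1 : Continuous (fun q : {f : X → X // Isometry f} × X => dist q.2 x₀) :=
    continuous_snd.dist continuous_const
  have hc2 : Continuous (fun q : {f : X → X // Isometry f} × X =>
      dist (q.1.1 x₀) (g₀.1 x₀)) :=
    (((continuous_apply x₀).comp continuous_subtype_val).comp continuous_fst).dist
      continuous_const
  have hU : IsOpen {q : {f : X → X // Isometry f} × X |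
      dist q.2 x₀ < ε / 2 ∧ dist (q.1.1 x₀) (g₀.1 x₀) < ε / 2} :=
    (isOpen_lt hc1 continuous_const).inter (isOpen_lt hc2 continuous_const)
  have hmem : (⟨g₀, x₀⟩ : {f : X → X // Isometry f} × X) ∈ {q : {f : X → X // Isometry f} × X |
      dist q.2 x₀ < ε / 2 ∧ dist (q.1.1 x₀) (g₀.1 x₀) < ε / 2} := by
    simp [hε, half_pos hε]
  filter_upwards [hU.mem_nhds hmem] with q hq
  obtain ⟨h1, h2⟩ := hq
  have h3 := q.1.2.dist_eq q.2 x₀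
  have := dist_triangle (q.1.1 q.2) (q.1.1 x₀) (g₀.1 x₀)
  linarith

end aux

/-- For a proper metric space `X`, the map `IE(X) × X → X × X`, `(g,x) ↦ (gx, x)`, is
proper, where `IE(X)` carries the topology of pointwise convergence. In particular,
`IE(X)` is locally compact. -/
theorem stmt_14 {X : Type*} [MetricSpace X] [ProperSpace X] :
    IsProperMap (fun p : {f : X → X // Isometry f} × X => (p.1.1 p.2, p.2)) ∧
      LocallyCompactSpace {f : X → X // Isometry f} := by
  constructor
  · rw [isProperMap_iff_isCompact_preimage]
    constructor
    · exact eval_cont_aux.prodMk continuous_snd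
    · intro K hK
      rcases K.eq_empty_or_nonempty with rfl | ⟨⟨y₀, x₀'⟩, hyK⟩
      · simpa using isCompact_empty
      · -- X is nonempty
        set x₀ : X := x₀'
        obtain ⟨r, hr⟩ := hK.isBounded.subset_closedBall (x₀, x₀)
        have hr0 : 0 ≤ r := by
          have := hr hyK
          simp only [mem_closedBall] at this
          have h0 : (0:ℝ) ≤ dist ((y₀, x₀') : X × X) (x₀, x₀) := dist_nonneg
          linarith
        set T : Set {f : X → X // Isometry f} := {g | dist (g.1 x₀) x₀ ≤ 2 * r}
        have hTcomp : IsCompact T := by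
          rw [Topology.IsEmbedding.subtypeVal.isCompact_iff]
          have himg : Subtype.val '' T = {f : X → X | Isometry f ∧ dist (f x₀) x₀ ≤ 2 * r} := by
            ext f
            constructor
            · rintro ⟨⟨g, hg⟩, hgT, rfl⟩
              exact ⟨hg, hgT⟩
            · rintro ⟨hf, hd⟩
              exact ⟨⟨f, hf⟩, hd, rfl⟩
          rw [himg]
          exact key_compact_aux x₀ (2 * r)
        have hsub : (fun p : {f : X → X // Isometry f} × X => (p.1.1 p.2, p.2)) ⁻¹' K ⊆
            T ×ˢ closedBall x₀ r := by
          rintro ⟨g, x⟩ hp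
          have hp' := hr hp
          simp only [mem_closedBall, Prod.dist_eq, max_le_iff] at hp'
          obtain ⟨h1, h2⟩ := hp'
          constructor
          · show dist (g.1 x₀) x₀ ≤ 2 * r
            have h3 := g.2.dist_eq x₀ x
            have := dist_triangle (g.1 x₀) (g.1 x) x₀
            have h4 : dist x₀ x = dist x x₀ := dist_comm _ _
            linarith
          · exact h2
        have hcl : IsClosed ((fun p : {f : X → X // Isometry f} × X =>
            (p.1.1 p.2, p.2)) ⁻¹' K) :=
          hK.isClosed.preimage (eval_cont_aux.prodMk continuous_snd)
        exact (hTcomp.prod (isCompact_closedBall x₀ r)).of_isClosed_subset hcl hsub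
  · rcases isEmpty_or_nonempty X with hX | hX
    · have : Subsingleton {f : X → X // Isometry f} := by
        constructor
        rintro ⟨f, _⟩ ⟨g, _⟩
        ext x
        exact (hX.false x).elim
      have : Finite {f : X → X // Isometry f} := Finite.of_subsingleton
      refine ⟨fun g n hn => ⟨n, hn, subset_rfl, n.toFinite.isCompact⟩⟩
    · obtain ⟨x₀⟩ := hX
      have : WeaklyLocallyCompactSpace {f : X → X // Isometry f} := by
        constructor
        intro g₀
        refine ⟨{g | dist (g.1 x₀) (g₀.1 x₀) ≤ 1}, ?_, ?_⟩
        · rw [Topology.IsEmbedding.subtypeVal.isCompact_iff]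
          have hsub : Subtype.val '' {g : {f : X → X // Isometry f} |
              dist (g.1 x₀) (g₀.1 x₀) ≤ 1} ⊆
              {f : X → X | Isometry f ∧ dist (f x₀) x₀ ≤ 1 + dist (g₀.1 x₀) x₀} := by
            rintro f ⟨⟨g, hg⟩, hgT, rfl⟩
            refine ⟨hg, ?_⟩
            have := dist_triangle (g x₀) (g₀.1 x₀) x₀
            simp only [mem_setOf_eq] at hgT
            linarith
          have hcl : IsClosed (Subtype.val '' {g : {f : X → X // Isometry f} |
              dist (g.1 x₀) (g₀.1 x₀) ≤ 1}) := by
            have himg : Subtype.val '' {g : {f : X → X // Isometry f} |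
                dist (g.1 x₀) (g₀.1 x₀) ≤ 1} =
                {f : X → X | Isometry f ∧ dist (f x₀) (g₀.1 x₀) ≤ 1} := by
              ext f
              constructor
              · rintro ⟨⟨g, hg⟩, hgT, rfl⟩; exact ⟨hg, hgT⟩
              · rintro ⟨hf, hd⟩; exact ⟨⟨f, hf⟩, hd, rfl⟩
            rw [himg]
            exact isom_closed_aux.inter
              (isClosed_le ((continuous_apply x₀).dist continuous_const) continuous_const)
          exact (key_compact_aux x₀ (1 + dist (g₀.1 x₀) x₀)).of_isClosed_subset hcl hsub
        · have hopen : IsOpen {g : {f : X → X // Isometry f} |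
              dist (g.1 x₀) (g₀.1 x₀) < 1} :=
            isOpen_lt (((continuous_apply x₀).comp continuous_subtype_val).dist
              continuous_const) continuous_const
          have hmem : g₀ ∈ {g : {f : X → X // Isometry f} |
              dist (g.1 x₀) (g₀.1 x₀) < 1} := by simp
          exact Filter.mem_of_superset (hopen.mem_nhds hmem) fun g hg => le_of_lt (show dist (g.1 x₀) (g₀.1 x₀) < 1 from hg)
      infer_instance
end

section
/- Let X be a proper metric space. Then the group Iso(X) of surjective isometries of X is a closed subset of the monoid IE(X) of isometric embeddings of X, in the topology of pointwise convergence. -/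
open Filter Topology


/-- For a proper metric space `X`, the group `Iso(X)` of surjective isometries is
closed in the monoid `IE(X)` of isometric embeddings, in the topology of pointwise
convergence. -/
theorem stmt_15 {X : Type*} [MetricSpace X] [ProperSpace X] :
    IsClosed {g : {f : X → X // Isometry f} | Function.Surjective g.1} := by
  rw [isClosed_iff_clusterPt]
  intro g hg y
  classical
  set S := {g : {f : X → X // Isometry f} | Function.Surjective g.1} with hS
  set F := 𝓝 g ⊓ 𝓟 S with hFdef
  have hF : F.NeBot := hg
  -- choice of preimage of y
  let c : {f : X → X // Isometry f} → X := fun f =>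
    if h : ∃ x, f.1 x = y then h.choose else y
  have hc : ∀ f ∈ S, f.1 (c f) = y := by
    intro f hf
    have h : ∃ x, f.1 x = y := hf y
    simp only [c, dif_pos h]
    exact h.choose_spec
  -- evaluation maps are continuous
  have heval : ∀ z : X, Continuous fun f : {f : X → X // Isometry f} => f.1 z :=
    fun z => (continuous_apply z).comp continuous_subtype_val
  set r := dist y (g.1 y) + 1 with hr
  -- the pushforward filter is supported on a compact ball
  have hA0 : {f : {f : X → X // Isometry f} | dist (f.1 y) (g.1 y) < 1} ∈ 𝓝 g := by
    have : IsOpen {f : {f : X → X // Isometry f} | dist (f.1 y) (g.1 y) < 1} :=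
      isOpen_lt (by continuity) continuous_const
    exact this.mem_nhds (by simp)
  have hmap : F.map c ≤ 𝓟 (Metric.closedBall y r) := by
    rw [Filter.le_principal_iff, Filter.mem_map]
    have h1 : {f : {f : X → X // Isometry f} | dist (f.1 y) (g.1 y) < 1} ∩ S ∈ F :=
      Filter.inter_mem (Filter.mem_inf_of_left hA0)
        (Filter.mem_inf_of_right (Filter.mem_principal_self S))
    refine Filter.mem_of_superset h1 ?_
    rintro f ⟨hf1, hf2⟩
    have : dist (c f) y = dist (f.1 (c f)) (f.1 y) := (f.2.dist_eq _ _).symm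
    rw [hc f hf2] at this
    rw [Set.mem_preimage, Metric.mem_closedBall, this]
    calc dist y (f.1 y) ≤ dist y (g.1 y) + dist (g.1 y) (f.1 y) := dist_triangle _ _ _
      _ ≤ dist y (g.1 y) + 1 := by
          have := hf1
          simp only [Set.mem_setOf_eq] at this
          linarith [dist_comm (f.1 y) (g.1 y) ▸ this]
  obtain ⟨x, -, hx⟩ := (isCompact_closedBall y r).exists_clusterPt hmap
  refine ⟨x, ?_⟩
  -- show g.1 x = y
  have key : ∀ ε > 0, dist (g.1 x) y < 2 * ε := by
    intro ε hε
    have hAe : {f : {f : X → X // Isometry f} | dist (f.1 x) (g.1 x) < ε} ∩ S ∈ F := by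
      refine Filter.inter_mem (Filter.mem_inf_of_left ?_)
        (Filter.mem_inf_of_right (Filter.mem_principal_self S))
      have : IsOpen {f : {f : X → X // Isometry f} | dist (f.1 x) (g.1 x) < ε} :=
        isOpen_lt (by continuity) continuous_const
      exact this.mem_nhds (by simpa)
    have himg : c '' ({f : {f : X → X // Isometry f} | dist (f.1 x) (g.1 x) < ε} ∩ S)
        ∈ F.map c :=
      Filter.image_mem_map hAe
    have hball : Metric.ball x ε ∈ 𝓝 x := Metric.ball_mem_nhds x hε
    have : (Metric.ball x ε ∩
        c '' ({f : {f : X → X // Isometry f} | dist (f.1 x) (g.1 x) < ε} ∩ S)).Nonempty := by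
      have := hx
      rw [clusterPt_iff_nonempty] at this
      exact this hball himg
    obtain ⟨z, hz1, f, ⟨hf1, hf2⟩, rfl⟩ := this
    have hfz : f.1 (c f) = y := hc f hf2
    calc dist (g.1 x) y ≤ dist (g.1 x) (f.1 x) + dist (f.1 x) y := dist_triangle _ _ _
      _ = dist (g.1 x) (f.1 x) + dist (f.1 x) (f.1 (c f)) := by rw [hfz]
      _ = dist (g.1 x) (f.1 x) + dist x (c f) := by rw [f.2.dist_eq]
      _ < ε + ε := by
          apply add_lt_add
          · rw [dist_comm]; exact hf1
          · rw [dist_comm]; exact hz1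
      _ = 2 * ε := by ring
  have : dist (g.1 x) y ≤ 0 := by
    by_contra h
    push_neg at h
    have := key (dist (g.1 x) y / 4) (by linarith)
    linarith
  exact dist_le_zero.mp this
end
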